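/- Let 1/2 ≤ H < 1 and define ψ₁(k) = (1/H)·(k^{2H} − (k−1)^{2H}) − (2/(2H+1))·((k+1)^{2H+1} − 2k^{2H+1} + (k−1)^{2H+1}). Then ψ₁(k) / (2(1−2H)·k^{2H−1}) → 1 as k → ∞ when H ≠ 1/2, and ψ₁(k)·k^{1−2H} → 2(1−2H) as k → ∞ in general. -/

import Mathlib

open Filter

noncomputable section

/-- `ψ₁(k) = (1/H)(k^{2H} − (k−1)^{2H}) − (2/(2H+1))((k+1)^{2H+1} − 2k^{2H+1} + (k−1)^{2H+1})`. -/
def psi1 (H : ℝ) (k : ℕ) : ℝ :=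
  (1/H) * ((k:ℝ) ^ (2*H) - ((k:ℝ) - 1) ^ (2*H))
    - (2/(2*H+1)) * (((k:ℝ) + 1) ^ (2*H+1) - 2 * (k:ℝ) ^ (2*H+1) + ((k:ℝ) - 1) ^ (2*H+1))

/-- First-order slope limit: `(1 - (1-x)^p)/x → p` as `x → 0⁺`. -/
lemma psi1_slopeA (p : ℝ) :
    Tendsto (fun x : ℝ => (1 - (1-x)^p)/x) (nhdsWithin 0 (Set.Ioi 0)) (nhds p) := by
  have h1 : HasDerivAt (fun x : ℝ => (1:ℝ) - x) (-1) 0 := (hasDerivAt_id 0).const_sub 1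
  have h2 : HasDerivAt (fun y : ℝ => y ^ p) (p * (1:ℝ) ^ (p-1)) ((fun x : ℝ => (1:ℝ) - x) 0) := by
    simpa using Real.hasDerivAt_rpow_const (x := (1:ℝ)) (p := p) (Or.inl one_ne_zero)
  have hd : HasDerivAt (fun x : ℝ => (1-x)^p) (-p) 0 := by
    have := h2.comp 0 h1
    exact this.congr_deriv (by simp)
  rw [hasDerivAt_iff_tendsto_slope] at hd
  have hsub : Set.Ioi (0:ℝ) ⊆ {(0:ℝ)}ᶜ := by intro x hx; simp at hx ⊢; positivity
  have := (hd.neg).mono_left (nhdsWithin_mono 0 hsub)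
  rw [neg_neg] at this
  refine this.congr (fun x => ?_)
  simp [slope, Real.one_rpow]
  ring

/-- Symmetric slope limit: `((1+x)^q - (1-x)^q)/x → 2q` as `x → 0⁺`. -/
lemma psi1_slopeB (q : ℝ) :
    Tendsto (fun x : ℝ => ((1+x)^q - (1-x)^q)/x) (nhdsWithin 0 (Set.Ioi 0)) (nhds (2*q)) := by
  have h1 : HasDerivAt (fun x : ℝ => (1:ℝ) + x) 1 0 := (hasDerivAt_id 0).const_add 1
  have h2 : HasDerivAt (fun y : ℝ => y ^ q) (q * (1:ℝ) ^ (q-1)) ((fun x : ℝ => (1:ℝ) + x) 0) := by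
    simpa using Real.hasDerivAt_rpow_const (x := (1:ℝ)) (p := q) (Or.inl one_ne_zero)
  have hp : HasDerivAt (fun x : ℝ => (1+x)^q) q 0 := by
    have := h2.comp 0 h1; exact this.congr_deriv (by simp)
  have h3 : HasDerivAt (fun x : ℝ => (1:ℝ) - x) (-1) 0 := (hasDerivAt_id 0).const_sub 1
  have h4 : HasDerivAt (fun y : ℝ => y ^ q) (q * (1:ℝ) ^ (q-1)) ((fun x : ℝ => (1:ℝ) - x) 0) := by
    simpa using Real.hasDerivAt_rpow_const (x := (1:ℝ)) (p := q) (Or.inl one_ne_zero)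
  have hm : HasDerivAt (fun x : ℝ => (1-x)^q) (-q) 0 := by
    have := h4.comp 0 h3; exact this.congr_deriv (by simp)
  have hd : HasDerivAt (fun x : ℝ => (1+x)^q - (1-x)^q) (2*q) 0 := by
    have := hp.sub hm; exact this.congr_deriv (by ring)
  rw [hasDerivAt_iff_tendsto_slope] at hd
  have hsub : Set.Ioi (0:ℝ) ⊆ {(0:ℝ)}ᶜ := by intro x hx; simp at hx ⊢; positivity
  refine (hd.mono_left (nhdsWithin_mono 0 hsub)).congr (fun x => ?_)
  simp [slope, Real.one_rpow]
  ring

/-- Second-order limit via L'Hôpital: `((1+x)^a - 2 + (1-x)^a)/x² → a(a-1)` as `x → 0⁺`. -/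
lemma psi1_lemB (a : ℝ) :
    Tendsto (fun x : ℝ => ((1+x)^a - 2 + (1-x)^a)/x^2)
      (nhdsWithin 0 (Set.Ioi 0)) (nhds (a*(a-1))) := by
  have key := HasDerivAt.lhopital_zero_right_on_Ioo (a := (0:ℝ)) (b := 1)
    (f := fun x : ℝ => (1+x)^a - 2 + (1-x)^a)
    (f' := fun x : ℝ => a*(1+x)^(a-1) - a*(1-x)^(a-1))
    (g := fun x : ℝ => x^2) (g' := fun x : ℝ => 2*x) (l := nhds (a*(a-1)))
    one_pos ?_ ?_ ?_ ?_ ?_ ?_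
  · exact key
  · intro x hx
    have hx1 : (1:ℝ) + x ≠ 0 := by simp at hx; nlinarith [hx.1]
    have hx2 : (1:ℝ) - x ≠ 0 := by simp at hx; nlinarith [hx.2]
    have hp1 : HasDerivAt (fun y : ℝ => (1:ℝ) + y) 1 x := (hasDerivAt_id x).const_add 1
    have hp2 : HasDerivAt (fun y : ℝ => y ^ a) (a * ((1:ℝ)+x) ^ (a-1)) ((1:ℝ)+x) :=
      Real.hasDerivAt_rpow_const (Or.inl hx1)
    have hm1 : HasDerivAt (fun y : ℝ => (1:ℝ) - y) (-1) x := (hasDerivAt_id x).const_sub 1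
    have hm2 : HasDerivAt (fun y : ℝ => y ^ a) (a * ((1:ℝ)-x) ^ (a-1)) ((1:ℝ)-x) :=
      Real.hasDerivAt_rpow_const (Or.inl hx2)
    have h := ((hp2.comp x hp1).sub_const 2).add (hm2.comp x hm1)
    exact h.congr_deriv (by ring)
  · intro x _
    simpa [two_mul] using (hasDerivAt_pow 2 x)
  · intro x hx
    simp only [Set.mem_Ioo] at hx
    exact mul_ne_zero two_ne_zero (ne_of_gt hx.1)
  · have hc : ContinuousAt (fun x : ℝ => (1+x)^a - 2 + (1-x)^a) 0 := by
      have c1 : ContinuousAt (fun x : ℝ => (1+x)^a) 0 := by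
        apply ContinuousAt.rpow_const (by fun_prop) (Or.inl (by norm_num))
      have c2 : ContinuousAt (fun x : ℝ => (1-x)^a) 0 := by
        apply ContinuousAt.rpow_const (by fun_prop) (Or.inl (by norm_num))
      exact (c1.sub continuousAt_const).add c2
    have := hc.tendsto
    have h0 : ((1:ℝ)+0)^a - 2 + (1-0)^a = 0 := by norm_num
    rw [h0] at this
    exact this.mono_left nhdsWithin_le_nhds
  · have : Tendsto (fun x : ℝ => x^2) (nhds 0) (nhds 0) := by
      simpa using (continuous_pow 2).tendsto (0:ℝ)
    exact this.mono_left nhdsWithin_le_nhds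
  · have h := (psi1_slopeB (a-1)).const_mul (a/2)
    have heq : a/2 * (2*(a-1)) = a*(a-1) := by ring
    rw [heq] at h
    refine h.congr' ?_
    filter_upwards [self_mem_nhdsWithin] with x hx
    have hx0 : x ≠ 0 := ne_of_gt hx
    field_simp

/-- The key algebraic identity: `ψ₁(k)·k^{1-2H}` as a function of `x = 1/k`. -/
lemma psi1_mul_eq (H : ℝ) (k : ℕ) (hk : 1 ≤ k) :
    psi1 H k * (k:ℝ) ^ (1 - 2*H) =
      (1/H) * ((1 - (1-(1/(k:ℝ)))^(2*H))/(1/(k:ℝ)))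
        - (2/(2*H+1)) * (((1+(1/(k:ℝ)))^(2*H+1) - 2 + (1-(1/(k:ℝ)))^(2*H+1))/(1/(k:ℝ))^2) := by
  have hk0 : (0:ℝ) < k := by exact_mod_cast hk
  have hk1 : (1:ℝ) ≤ k := by exact_mod_cast hk
  have h1m : (0:ℝ) ≤ 1 - 1/(k:ℝ) := by
    rw [sub_nonneg, div_le_one hk0]; exact hk1
  have h1p : (0:ℝ) ≤ 1 + 1/(k:ℝ) := by positivity
  have e1 : ((k:ℝ) - 1) = k * (1 - 1/(k:ℝ)) := by field_simp
  have e2 : ((k:ℝ) + 1) = k * (1 + 1/(k:ℝ)) := by field_simp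
  have hA : (k:ℝ)^(2*H) * (k:ℝ)^(1-2*H) = k := by
    rw [← Real.rpow_add hk0, show 2*H + (1-2*H) = 1 by ring, Real.rpow_one]
  have hB : (k:ℝ)^(2*H+1) * (k:ℝ)^(1-2*H) = (k:ℝ)^2 := by
    rw [← Real.rpow_add hk0, show 2*H+1 + (1-2*H) = (2:ℝ) by ring, Real.rpow_two]
  rw [psi1, e1, e2, Real.mul_rpow hk0.le h1m, Real.mul_rpow hk0.le h1p,
    Real.mul_rpow hk0.le h1m]
  have d1 : ∀ a:ℝ, a / (1/(k:ℝ)) = a * k := fun a => by field_simp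
  have d2 : ∀ a:ℝ, a / ((1/(k:ℝ))^2) = a * k^2 := fun a => by
    rw [div_pow]; field_simp
  rw [d1, d2]
  linear_combination ((1/H)*(1 - (1-1/(k:ℝ))^(2*H))) * hA
    - (2/(2*H+1))*((1+1/(k:ℝ))^(2*H+1) - 2 + (1-1/(k:ℝ))^(2*H+1)) * hB

/-- for `1/2 ≤ H < 1`, `ψ₁(k)/(2(1−2H)k^{2H−1}) → 1` as `k → ∞` when `H ≠ 1/2`,
and `ψ₁(k) · k^{1−2H} → 2(1−2H)` in general. -/
theorem psi1_asymptotics (H : ℝ) (h1 : 1/2 ≤ H) (h2 : H < 1) :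
    (H ≠ 1/2 →
      Tendsto (fun k : ℕ => psi1 H k / (2 * (1 - 2*H) * (k:ℝ) ^ (2*H - 1)))
        atTop (nhds 1))
    ∧ Tendsto (fun k : ℕ => psi1 H k * (k:ℝ) ^ (1 - 2*H)) atTop (nhds (2 * (1 - 2*H))) := by
  have hH0 : H ≠ 0 := by intro h; rw [h] at h1; norm_num at h1
  have hH1 : 2*H + 1 ≠ 0 := by intro h; nlinarith
  -- the limit of the rescaled function of x = 1/k
  have hG : Tendsto (fun x : ℝ =>
      (1/H) * ((1 - (1-x)^(2*H))/x)
        - (2/(2*H+1)) * (((1+x)^(2*H+1) - 2 + (1-x)^(2*H+1))/x^2))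
      (nhdsWithin 0 (Set.Ioi 0)) (nhds (2*(1-2*H))) := by
    have hA := (psi1_slopeA (2*H)).const_mul (1/H)
    have hB := (psi1_lemB (2*H+1)).const_mul (2/(2*H+1))
    have := hA.sub hB
    have heq : 1/H * (2*H) - 2/(2*H+1) * ((2*H+1)*(2*H+1-1)) = 2*(1-2*H) := by
      field_simp
      ring
    rw [heq] at this
    exact this
  -- 1/k → 0⁺
  have hcomp : Tendsto (fun k : ℕ => 1/(k:ℝ)) atTop (nhdsWithin 0 (Set.Ioi 0)) := by
    rw [tendsto_nhdsWithin_iff]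
    refine ⟨tendsto_one_div_atTop_nhds_zero_nat, ?_⟩
    filter_upwards [eventually_ge_atTop 1] with k hk
    have : (0:ℝ) < k := by exact_mod_cast hk
    simp only [Set.mem_Ioi]
    positivity
  -- the second statement
  have main2 : Tendsto (fun k : ℕ => psi1 H k * (k:ℝ) ^ (1 - 2*H)) atTop
      (nhds (2 * (1 - 2*H))) := by
    refine (hG.comp hcomp).congr' ?_
    filter_upwards [eventually_ge_atTop 1] with k hk
    exact (psi1_mul_eq H k hk).symm
  refine ⟨fun hne => ?_, main2⟩
  have hHlt : 1/2 < H := lt_of_le_of_ne h1 (Ne.symm hne)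
  have hc : 2 * (1 - 2*H) ≠ 0 := by intro h; nlinarith
  have main1 := main2.div_const (2 * (1 - 2*H))
  rw [div_self hc] at main1
  refine main1.congr' ?_
  filter_upwards [eventually_ge_atTop 1] with k hk
  have hk0 : (0:ℝ) < k := by exact_mod_cast hk
  have hpow : (k:ℝ)^(1-2*H) = ((k:ℝ)^(2*H-1))⁻¹ := by
    rw [show (1-2*H) = -(2*H-1) by ring, Real.rpow_neg hk0.le]
  rw [hpow]
  have hb : (k:ℝ)^(2*H-1) ≠ 0 := ne_of_gt (Real.rpow_pos_of_pos hk0 _)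
  field_simp

end
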